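/- Let n ≥ 6 and let Γ' be a signed graph of order n that attains the maximum largest eigenvalue λ1 among all unbalanced, negative-C4-free signed graphs of order n. Then the underlying graph of Γ' contains a cycle of length 4 as a subgraph. -/

import Mathlib

open scoped BigOperators

/-- A signed graph on the vertex set `Fin n`: a simple graph together with a
symmetric `±1` sign on each edge. -/
structure SignedGraph (n : ℕ) where
  G : SimpleGraph (Fin n)
  sign : Fin n → Fin n → ℤ
  sign_symm : ∀ i j, sign i j = sign j i
  sign_pm : ∀ i j, G.Adj i j → sign i j = 1 ∨ sign i j = -1

namespace SignedGraph

variable {n : ℕ}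

open Classical in
/-- The adjacency matrix of a signed graph, as a real matrix. -/
noncomputable def adjMatrix (Γ : SignedGraph n) : Matrix (Fin n) (Fin n) ℝ :=
  fun i j => if Γ.G.Adj i j then (Γ.sign i j : ℝ) else 0

/-- The largest eigenvalue (the index) of a signed graph. -/
noncomputable def lambda1 (Γ : SignedGraph n) : ℝ :=
  sSup (spectrum ℝ Γ.adjMatrix)

/-- The sign of an unordered edge. -/
def signEdge (Γ : SignedGraph n) : Sym2 (Fin n) → ℤ :=
  Sym2.lift ⟨Γ.sign, Γ.sign_symm⟩

/-- The sign of a walk: the product of the signs of its edges. -/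
def walkSign (Γ : SignedGraph n) {u v : Fin n} (w : Γ.G.Walk u v) : ℤ :=
  (w.edges.map Γ.signEdge).prod

/-- A negative cycle: a cycle whose sign is `-1`
(equivalently, with an odd number of negative edges). -/
def IsNegCycle (Γ : SignedGraph n) {u : Fin n} (c : Γ.G.Walk u u) : Prop :=
  c.IsCycle ∧ Γ.walkSign c = -1

/-- A signed graph is unbalanced if it contains a negative cycle. -/
def Unbalanced (Γ : SignedGraph n) : Prop :=
  ∃ (u : Fin n) (c : Γ.G.Walk u u), Γ.IsNegCycle c

/-- A signed graph is negative-`C₄`-free if it contains no negative 4-cycle. -/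
def NegC4Free (Γ : SignedGraph n) : Prop :=
  ∀ (u : Fin n) (c : Γ.G.Walk u u), c.IsCycle → c.length = 4 → Γ.walkSign c ≠ -1

end SignedGraph

/-- The signed graph `Γ₁`: vertices `2,…,n-1` induce an all-positive complete
graph, vertices `0` and `1` are joined to each other by a negative edge and to
vertex `2` by positive edges, and have no other neighbours. -/
def Gamma1 (n : ℕ) : SignedGraph n where
  G :=
    { Adj := fun i j => i ≠ j ∧ (2 ≤ min i.val j.val ∨ max i.val j.val ≤ 2)
      symm := by
        constructor
        intro i j h
        refine ⟨Ne.symm h.1, ?_⟩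
        rw [min_comm, max_comm]
        exact h.2
      loopless := by constructor; intro i h; exact h.1 rfl }
  sign := fun i j =>
    if (i.val = 0 ∧ j.val = 1) ∨ (i.val = 1 ∧ j.val = 0) then -1 else 1
  sign_symm := by
    intro i j
    try dsimp only
    by_cases h : (i.val = 0 ∧ j.val = 1) ∨ (i.val = 1 ∧ j.val = 0)
    · rw [if_pos h, if_pos (by tauto)]
    · rw [if_neg h, if_neg (by tauto)]
  sign_pm := by
    intro i j _
    try dsimp only
    by_cases h : (i.val = 0 ∧ j.val = 1) ∨ (i.val = 1 ∧ j.val = 0)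
    · rw [if_pos h]; right; rfl
    · rw [if_neg h]; left; rfl

/-- The signed graph `Γ₂`: vertices `4,…,n-1` induce an all-positive complete
graph, vertices `2` and `3` are joined by positive edges to all of `4,…,n-1`
(but not to each other), vertices `0` and `1` are joined to each other by a
negative edge and to `2` and `3` by positive edges, and have no other
neighbours. -/
def Gamma2 (n : ℕ) : SignedGraph n where
  G :=
    { Adj := fun i j => i ≠ j ∧
        ((i.val ≤ 1 ∧ j.val ≤ 3) ∨ (j.val ≤ 1 ∧ i.val ≤ 3) ∨
         (2 ≤ i.val ∧ i.val ≤ 3 ∧ 4 ≤ j.val) ∨ (2 ≤ j.val ∧ j.val ≤ 3 ∧ 4 ≤ i.val) ∨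
         (4 ≤ i.val ∧ 4 ≤ j.val))
      symm := by
        constructor
        intro i j h
        exact ⟨Ne.symm h.1, by tauto⟩
      loopless := by constructor; intro i h; exact h.1 rfl }
  sign := fun i j =>
    if (i.val = 0 ∧ j.val = 1) ∨ (i.val = 1 ∧ j.val = 0) then -1 else 1
  sign_symm := by
    intro i j
    try dsimp only
    by_cases h : (i.val = 0 ∧ j.val = 1) ∨ (i.val = 1 ∧ j.val = 0)
    · rw [if_pos h, if_pos (by tauto)]
    · rw [if_neg h, if_neg (by tauto)]
  sign_pm := by
    intro i j _
    try dsimp only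
    by_cases h : (i.val = 0 ∧ j.val = 1) ∨ (i.val = 1 ∧ j.val = 0)
    · rw [if_pos h]; right; rfl
    · rw [if_neg h]; left; rfl


/-- The all-negative complete signed graph `(K_n, -)`. -/
def NegKn (n : ℕ) : SignedGraph n where
  G := ⊤
  sign := fun _ _ => -1
  sign_symm := fun _ _ => rfl
  sign_pm := fun _ _ _ => Or.inr rfl

/-- `Γ` is switching equivalent to `Γ'` (up to a relabelling of the vertices):
there is a bijection of the vertices matching the underlying graphs and a
`±1`-valued switching function `s` relating the two sign functions. -/
def SwitchingEquiv {n : ℕ} (Γ Γ' : SignedGraph n) : Prop :=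
  ∃ e : Fin n ≃ Fin n, ∃ s : Fin n → ℤ, (∀ i, s i = 1 ∨ s i = -1) ∧
    (∀ i j, Γ.G.Adj i j ↔ Γ'.G.Adj (e i) (e j)) ∧
    (∀ i j, Γ.G.Adj i j → Γ.sign i j = s i * Γ'.sign (e i) (e j) * s j)


/-! ### Auxiliary lemmas -/

namespace SignedGraph
variable {n : ℕ}

lemma isHermitian_adjMatrix (Γ : SignedGraph n) : Γ.adjMatrix.IsHermitian := by
  refine Matrix.IsHermitian.ext fun i j => ?_
  simp only [adjMatrix, star_trivial]
  by_cases h : Γ.G.Adj i j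
  · rw [if_pos h, if_pos (h.symm), Γ.sign_symm]
  · rw [if_neg h, if_neg (fun h' => h h'.symm)]

end SignedGraph

lemma gamma1_adj {n : ℕ} (i j : Fin n) :
    (Gamma1 n).G.Adj i j ↔ i ≠ j ∧ (2 ≤ min i.val j.val ∨ max i.val j.val ≤ 2) := Iff.rfl

lemma gamma1_sign_cases {n : ℕ} (i j : Fin n) :
    ((Gamma1 n).sign i j = -1 ∧ ((i.val = 0 ∧ j.val = 1) ∨ (i.val = 1 ∧ j.val = 0)))
    ∨ ((Gamma1 n).sign i j = 1 ∧ ¬((i.val = 0 ∧ j.val = 1) ∨ (i.val = 1 ∧ j.val = 0))) := by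
  by_cases h : (i.val = 0 ∧ j.val = 1) ∨ (i.val = 1 ∧ j.val = 0)
  · left; exact ⟨if_pos h, h⟩
  · right; exact ⟨if_neg h, h⟩

lemma gamma1_adj_le {n : ℕ} {i j : Fin n} (h : (Gamma1 n).G.Adj i j) (hi : i.val ≤ 1) :
    j.val ≤ 2 := by
  rcases h.2 with h2 | h2
  · omega
  · omega

lemma gamma1_unbalanced {n : ℕ} (hn : 6 ≤ n) : (Gamma1 n).Unbalanced := by
  set v0 : Fin n := ⟨0, by omega⟩ with hv0
  set v1 : Fin n := ⟨1, by omega⟩ with hv1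
  set v2 : Fin n := ⟨2, by omega⟩ with hv2
  have a01 : (Gamma1 n).G.Adj v0 v1 := ⟨by simp [Fin.ext_iff, hv0, hv1], Or.inr (by simp [hv0, hv1])⟩
  have a12 : (Gamma1 n).G.Adj v1 v2 := ⟨by simp [Fin.ext_iff, hv1, hv2], Or.inr (by simp [hv1, hv2])⟩
  have a20 : (Gamma1 n).G.Adj v2 v0 := ⟨by simp [Fin.ext_iff, hv2, hv0], Or.inr (by simp [hv2, hv0])⟩
  refine ⟨v0, .cons a01 (.cons a12 (.cons a20 .nil)), ⟨⟨⟨?_⟩, by simp⟩, ?_⟩, ?_⟩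
  · simp only [SimpleGraph.Walk.edges_cons, SimpleGraph.Walk.edges_nil, List.nodup_cons,
      List.nodup_nil, List.mem_cons, List.not_mem_nil, or_false, and_true, Sym2.eq,
      Sym2.rel_iff', Prod.swap_prod_mk, Prod.mk.injEq]
    push_neg
    simp [Fin.ext_iff, hv0, hv1, hv2]
  · simp only [SimpleGraph.Walk.support_cons, SimpleGraph.Walk.support_nil, List.tail_cons,
      List.nodup_cons, List.mem_cons, List.not_mem_nil, or_false, List.nodup_nil, and_true,
      List.mem_singleton]
    push_neg
    simp [Fin.ext_iff, hv0, hv1, hv2]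
  · simp only [SignedGraph.walkSign, SimpleGraph.Walk.edges_cons, SimpleGraph.Walk.edges_nil,
      List.map_cons, List.map_nil, List.prod_cons, List.prod_nil, SignedGraph.signEdge,
      Sym2.lift_mk]
    show (Gamma1 n).sign v0 v1 * ((Gamma1 n).sign v1 v2 * ((Gamma1 n).sign v2 v0 * 1)) = -1
    have s1 : (Gamma1 n).sign v0 v1 = -1 := by simp [Gamma1, hv0, hv1]
    have s2 : (Gamma1 n).sign v1 v2 = 1 := by simp [Gamma1, hv1, hv2]
    have s3 : (Gamma1 n).sign v2 v0 = 1 := by simp [Gamma1, hv2, hv0]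
    rw [s1, s2, s3]; ring

open Matrix

variable {n : ℕ}

noncomputable def maxEig (M : Matrix (Fin n) (Fin n) ℝ) : ℝ := sSup (spectrum ℝ M)

lemma spectrum_nonempty' (hn : 0 < n) (M : Matrix (Fin n) (Fin n) ℝ) (hM : M.IsHermitian) :
    (spectrum ℝ M).Nonempty := by
  rw [hM.spectrum_real_eq_range_eigenvalues]
  haveI : Nonempty (Fin n) := ⟨⟨0, hn⟩⟩
  exact Set.range_nonempty _

lemma le_maxEig (hn : 0 < n) {M : Matrix (Fin n) (Fin n) ℝ} (hM : M.IsHermitian) {μ : ℝ}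
    (hμ : μ ∈ spectrum ℝ M) : μ ≤ maxEig M :=
  le_csSup (Matrix.finite_real_spectrum (A := M)).bddAbove hμ

lemma maxEig_mem {M : Matrix (Fin n) (Fin n) ℝ} (hn : 0 < n) (hM : M.IsHermitian) :
    maxEig M ∈ spectrum ℝ M :=
  (spectrum_nonempty' hn M hM).csSup_mem (Matrix.finite_real_spectrum (A := M))

lemma maxEig_eigenvalue {M : Matrix (Fin n) (Fin n) ℝ} (hn : 0 < n) (hM : M.IsHermitian) :
    ∃ i, hM.eigenvalues i = maxEig M := by
  have := maxEig_mem hn hM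
  rw [hM.spectrum_real_eq_range_eigenvalues] at this
  exact this

lemma exists_maxEig_vec {M : Matrix (Fin n) (Fin n) ℝ} (hn : 0 < n) (hM : M.IsHermitian) :
    ∃ v : Fin n → ℝ, v ≠ 0 ∧ M *ᵥ v = maxEig M • v := by
  obtain ⟨i, hi⟩ := maxEig_eigenvalue hn hM
  refine ⟨⇑(hM.eigenvectorBasis i), ?_, by rw [hM.mulVec_eigenvectorBasis, hi]⟩
  intro h
  have h1 : ‖hM.eigenvectorBasis i‖ = 1 := hM.eigenvectorBasis.orthonormal.1 i
  have : hM.eigenvectorBasis i = 0 := by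
    ext j; exact congrFun h j
  rw [this] at h1; simp at h1

lemma maxEig_smul_one_sub_posSemidef {M : Matrix (Fin n) (Fin n) ℝ} (hn : 0 < n)
    (hM : M.IsHermitian) : (maxEig M • (1 : Matrix (Fin n) (Fin n) ℝ) - M).PosSemidef := by
  set t := maxEig M
  set U : Matrix (Fin n) (Fin n) ℝ := (hM.eigenvectorUnitary : Matrix (Fin n) (Fin n) ℝ) with hUdef
  have hU : U * star U = 1 := Matrix.mem_unitaryGroup_iff.mp hM.eigenvectorUnitary.2
  have key : t • (1 : Matrix (Fin n) (Fin n) ℝ) - M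
      = U * diagonal (fun i => t - hM.eigenvalues i) * star U := by
    have hs := hM.spectral_theorem
    have h1 : t • (1 : Matrix (Fin n) (Fin n) ℝ) = U * (t • 1) * star U := by
      rw [Matrix.mul_smul, Matrix.smul_mul, Matrix.mul_one, hU]
    rw [h1]
    nth_rewrite 1 [hs]
    rw [Unitary.conjStarAlgAut_apply]
    rw [← Matrix.sub_mul, ← Matrix.mul_sub]
    congr 1
    congr 1
    have : (t • (1 : Matrix (Fin n) (Fin n) ℝ)) = diagonal (fun _ => t) := by
      ext i j; by_cases h : i = j <;> simp [Matrix.diagonal_apply, h]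
    rw [this]
    have h2 : (diagonal (RCLike.ofReal ∘ hM.eigenvalues) : Matrix (Fin n) (Fin n) ℝ)
        = diagonal hM.eigenvalues := by
      congr 1
    rw [h2, Matrix.diagonal_sub]
  rw [key]
  refine Matrix.PosSemidef.mul_mul_conjTranspose_same ?_ U
  · exact Matrix.PosSemidef.diagonal (fun i => by
      have := le_maxEig hn hM (hM.eigenvalues_mem_spectrum_real i)
      simpa [t] using sub_nonneg.mpr this)

lemma rayleigh_le_maxEig {M : Matrix (Fin n) (Fin n) ℝ} (hn : 0 < n) (hM : M.IsHermitian)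
    (x : Fin n → ℝ) : x ⬝ᵥ (M *ᵥ x) ≤ maxEig M * (x ⬝ᵥ x) := by
  have h := (maxEig_smul_one_sub_posSemidef hn hM).dotProduct_mulVec_nonneg x
  rw [star_trivial] at h
  rw [Matrix.sub_mulVec, Matrix.smul_mulVec, Matrix.one_mulVec, dotProduct_sub,
    dotProduct_smul] at h
  simp only [smul_eq_mul] at h
  linarith

lemma eigenvec_of_rayleigh_eq {M : Matrix (Fin n) (Fin n) ℝ} (hn : 0 < n) (hM : M.IsHermitian)
    (x : Fin n → ℝ) (hx : x ⬝ᵥ (M *ᵥ x) = maxEig M * (x ⬝ᵥ x)) :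
    M *ᵥ x = maxEig M • x := by
  have h := ((maxEig_smul_one_sub_posSemidef hn hM).dotProduct_mulVec_zero_iff x).mp ?_
  · rw [Matrix.sub_mulVec, Matrix.smul_mulVec, Matrix.one_mulVec, sub_eq_zero] at h
    exact h.symm
  · rw [star_trivial, Matrix.sub_mulVec, Matrix.smul_mulVec, Matrix.one_mulVec,
      dotProduct_sub, dotProduct_smul, hx]
    simp

section Walks
open SimpleGraph
variable {V : Type*} {G : SimpleGraph V}

lemma walk4_decomp {u : V} (c : G.Walk u u) (h : c.length = 4) :
    ∃ (a b d : V) (h1 : G.Adj u a) (h2 : G.Adj a b) (h3 : G.Adj b d) (h4 : G.Adj d u),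
      c = .cons h1 (.cons h2 (.cons h3 (.cons h4 .nil))) := by
  cases c with
  | nil => simp at h
  | cons h1 p1 =>
    cases p1 with
    | nil => simp at h
    | cons h2 p2 =>
      cases p2 with
      | nil => simp at h
      | cons h3 p3 =>
        cases p3 with
        | nil => simp at h
        | cons h4 p4 =>
          cases p4 with
          | nil => exact ⟨_, _, _, h1, h2, h3, h4, rfl⟩
          | cons h5 p5 => simp [SimpleGraph.Walk.length_cons] at h

lemma cycle4_of_adj {u a j b : V} (h1 : G.Adj u a) (h2 : G.Adj a j) (h3 : G.Adj j b)
    (h4 : G.Adj b u) (hab : a ≠ b) (huj : u ≠ j) :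
    ∃ (c : G.Walk u u), c.IsCycle ∧ c.length = 4 := by
  have n1 : u ≠ a := h1.ne
  have n2 : a ≠ j := h2.ne
  have n3 : j ≠ b := h3.ne
  have n4 : b ≠ u := h4.ne
  have n1' := n1.symm; have n2' := n2.symm; have n3' := n3.symm; have n4' := n4.symm
  have hab' := hab.symm; have huj' := huj.symm
  refine ⟨.cons h1 (.cons h2 (.cons h3 (.cons h4 .nil))), ⟨⟨⟨?_⟩, by simp⟩, ?_⟩, by simp⟩
  · simp only [Walk.edges_cons, Walk.edges_nil, List.nodup_cons, List.nodup_nil, List.mem_cons,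
      List.not_mem_nil, or_false, and_true, Sym2.eq, Sym2.rel_iff', Prod.swap_prod_mk,
      Prod.mk.injEq]
    push_neg
    tauto
  · simp only [Walk.support_cons, Walk.support_nil, List.tail_cons, List.nodup_cons,
      List.mem_cons, List.not_mem_nil, or_false, List.nodup_nil, and_true,
      List.mem_singleton]
    push_neg
    tauto

end Walks

lemma gamma1_negC4Free {n : ℕ} (hn : 6 ≤ n) : (Gamma1 n).NegC4Free := by
  intro u c hc hlen hsign
  obtain ⟨a, b, d, h1, h2, h3, h4, rfl⟩ := walk4_decomp c hlen
  have hnodup := hc.2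
  simp only [SimpleGraph.Walk.support_cons, SimpleGraph.Walk.support_nil, List.tail_cons,
    List.nodup_cons, List.mem_cons, List.not_mem_nil, or_false, List.nodup_nil, and_true,
    List.mem_singleton, Fin.ext_iff] at hnodup
  have i1 : u.val ≤ 1 → a.val ≤ 2 := fun h => gamma1_adj_le h1 h
  have i4 : d.val ≤ 1 → u.val ≤ 2 := fun h => gamma1_adj_le h4 h
  have i2 : a.val ≤ 1 → b.val ≤ 2 := fun h => gamma1_adj_le h2 h
  have i3 : b.val ≤ 1 → d.val ≤ 2 := fun h => gamma1_adj_le h3 h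
  have i5 : a.val ≤ 1 → u.val ≤ 2 := fun h => gamma1_adj_le h1.symm h
  have i6 : b.val ≤ 1 → a.val ≤ 2 := fun h => gamma1_adj_le h2.symm h
  have i7 : d.val ≤ 1 → b.val ≤ 2 := fun h => gamma1_adj_le h3.symm h
  have i8 : u.val ≤ 1 → d.val ≤ 2 := fun h => gamma1_adj_le h4.symm h
  simp only [SignedGraph.walkSign, SimpleGraph.Walk.edges_cons, SimpleGraph.Walk.edges_nil,
    List.map_cons, List.map_nil, List.prod_cons, List.prod_nil, SignedGraph.signEdge,
    Sym2.lift_mk] at hsign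
  have hone : (u.val ≤ 1 ∧ a.val ≤ 1) ∨ (a.val ≤ 1 ∧ b.val ≤ 1) ∨ (b.val ≤ 1 ∧ d.val ≤ 1)
      ∨ (d.val ≤ 1 ∧ u.val ≤ 1) := by
    by_contra hall
    push_neg at hall
    obtain ⟨w1, w2, w3, w4⟩ := hall
    have s1 : (Gamma1 n).sign u a = 1 := by
      rcases gamma1_sign_cases u a with ⟨e, v⟩ | ⟨e, v⟩
      · omega
      · exact e
    have s2 : (Gamma1 n).sign a b = 1 := by
      rcases gamma1_sign_cases a b with ⟨e, v⟩ | ⟨e, v⟩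
      · omega
      · exact e
    have s3 : (Gamma1 n).sign b d = 1 := by
      rcases gamma1_sign_cases b d with ⟨e, v⟩ | ⟨e, v⟩
      · omega
      · exact e
    have s4 : (Gamma1 n).sign d u = 1 := by
      rcases gamma1_sign_cases d u with ⟨e, v⟩ | ⟨e, v⟩
      · omega
      · exact e
    rw [s1, s2, s3, s4] at hsign
    norm_num at hsign
  omega

lemma gamma1_lambda1 {n : ℕ} (hn : 6 ≤ n) : ((n : ℝ) - 3) ≤ (Gamma1 n).lambda1 := by
  classical
  have hpos : 0 < n := by omega
  set M := (Gamma1 n).adjMatrix with hM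
  have hH := (Gamma1 n).isHermitian_adjMatrix
  set S : Finset (Fin n) := Finset.univ.filter (fun i => 2 ≤ i.val) with hS
  set x : Fin n → ℝ := fun i => if 2 ≤ i.val then 1 else 0 with hx
  have hcard : S.card = n - 2 := by
    have h2 : (Finset.univ.filter (fun i : Fin n => ¬ 2 ≤ i.val))
        = {(⟨0, by omega⟩ : Fin n), ⟨1, by omega⟩} := by
      ext i
      simp [Fin.ext_iff]
      omega
    have h3 : (Finset.univ.filter (fun i : Fin n => ¬ 2 ≤ i.val)).card = 2 := by
      rw [h2]
      rw [Finset.card_insert_of_notMem (by simp [Fin.ext_iff])]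
      simp
    have h4 : S.card + (Finset.univ.filter (fun i : Fin n => ¬ 2 ≤ i.val)).card = n := by
      rw [hS]
      simpa using Finset.card_filter_add_card_filter_not
        (s := (Finset.univ : Finset (Fin n))) (p := fun i : Fin n => 2 ≤ i.val)
    omega
  have hxx : x ⬝ᵥ x = (S.card : ℝ) := by
    rw [dotProduct]
    have : ∀ i : Fin n, x i * x i = if 2 ≤ i.val then (1:ℝ) else 0 := by
      intro i; by_cases h : 2 ≤ i.val <;> simp [hx, h]
    rw [Finset.sum_congr rfl (fun i _ => this i), Finset.sum_boole]
  have hentry : ∀ i j : Fin n,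
      x i * (M i j * x j) = if (2 ≤ i.val ∧ 2 ≤ j.val ∧ i ≠ j) then (1:ℝ) else 0 := by
    intro i j
    by_cases hi : 2 ≤ i.val
    · by_cases hj : 2 ≤ j.val
      · by_cases hij : i = j
        · subst hij
          have : M i i = 0 := by simp [hM, SignedGraph.adjMatrix]
          simp [this]
        · have hadj : (Gamma1 n).G.Adj i j := ⟨hij, Or.inl (by omega)⟩
          have hsgn : (Gamma1 n).sign i j = 1 := by
            rcases gamma1_sign_cases i j with ⟨e, v⟩ | ⟨e, v⟩
            · omega
            · exact e
          have : M i j = 1 := by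
            simp [hM, SignedGraph.adjMatrix, hadj, hsgn]
          simp [this, hx, hi, hj, hij]
      · simp [hx, hj, hi]
    · simp [hx, hi]
  have hAx : x ⬝ᵥ (M *ᵥ x) = (S.card : ℝ) * ((S.card : ℝ) - 1) := by
    rw [dotProduct]
    simp only [Matrix.mulVec, dotProduct]
    have step1 : ∀ i : Fin n, x i * (∑ j, M i j * x j) = ∑ j, x i * (M i j * x j) := by
      intro i; rw [Finset.mul_sum]
    rw [Finset.sum_congr rfl (fun i _ => step1 i)]
    have step2 : ∀ i : Fin n, (∑ j, x i * (M i j * x j))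
        = if 2 ≤ i.val then (S.card : ℝ) - 1 else 0 := by
      intro i
      rw [Finset.sum_congr rfl (fun j _ => hentry i j)]
      by_cases hi : 2 ≤ i.val
      · rw [if_pos hi, Finset.sum_boole]
        have hfe : Finset.univ.filter (fun j : Fin n => 2 ≤ i.val ∧ 2 ≤ j.val ∧ i ≠ j)
            = S.erase i := by
          ext j
          simp [hS, Finset.mem_erase, hi]
          tauto
        rw [hfe, Finset.card_erase_of_mem (by simp [hS, hi])]
        have h1S : 1 ≤ S.card := by rw [hcard]; omega
        push_cast [Nat.cast_sub h1S]
        ring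
      · rw [if_neg hi]
        have hfe : Finset.univ.filter (fun j : Fin n => 2 ≤ i.val ∧ 2 ≤ j.val ∧ i ≠ j)
            = ∅ := by
          ext j; simp [hi]
        rw [Finset.sum_congr rfl (fun j _ => by rw [if_neg (by tauto)]), Finset.sum_const,
          smul_zero]
    rw [Finset.sum_congr rfl (fun i _ => step2 i)]
    rw [Finset.sum_ite, Finset.sum_const, Finset.sum_const, smul_zero, add_zero, ← hS]
    simp [mul_comm]
  have hr := rayleigh_le_maxEig hpos hH x
  rw [hAx, hxx] at hr
  have hcR : (S.card : ℝ) = (n : ℝ) - 2 := by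
    rw [hcard, Nat.cast_sub (by omega)]
    norm_num
  rw [hcR] at hr
  have hgt : (0:ℝ) < (n:ℝ) - 2 := by
    have : (6:ℝ) ≤ (n:ℝ) := by exact_mod_cast hn
    linarith
  have : (Gamma1 n).lambda1 = maxEig M := rfl
  rw [this]
  nlinarith [hr]

open Classical in
noncomputable def underMat {n : ℕ} (Γ : SignedGraph n) : Matrix (Fin n) (Fin n) ℝ :=
  fun i j => if Γ.G.Adj i j then 1 else 0

lemma underMat_herm {n : ℕ} (Γ : SignedGraph n) : (underMat Γ).IsHermitian := by
  refine Matrix.IsHermitian.ext fun i j => ?_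
  simp only [underMat, star_trivial]
  by_cases h : Γ.G.Adj i j
  · rw [if_pos h, if_pos h.symm]
  · rw [if_neg h, if_neg (fun h' => h h'.symm)]

theorem extremal_contains_C4 (n : ℕ) (hn : 6 ≤ n) (Γ' : SignedGraph n)
    (hub : Γ'.Unbalanced) (hfree : Γ'.NegC4Free)
    (hmax : ∀ Γ : SignedGraph n, Γ.Unbalanced → Γ.NegC4Free → Γ.lambda1 ≤ Γ'.lambda1) :
    ∃ (u : Fin n) (c : Γ'.G.Walk u u), c.IsCycle ∧ c.length = 4 := by
  classical
  by_contra hC4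
  have hpos : 0 < n := by omega
  have hlow : ((n:ℝ) - 3) ≤ Γ'.lambda1 :=
    le_trans (gamma1_lambda1 hn) (hmax _ (gamma1_unbalanced hn) (gamma1_negC4Free hn))
  set A := Γ'.adjMatrix with hA
  have hAH := Γ'.isHermitian_adjMatrix
  set B := underMat Γ' with hB
  have hBH := underMat_herm Γ'
  set μ := maxEig B with hμdef
  have hBnn : ∀ i j, 0 ≤ B i j := by
    intro i j; simp only [hB, underMat]; split <;> norm_num
  have hBabs : ∀ i j, |A i j| = B i j := by
    intro i j
    simp only [hA, hB, SignedGraph.adjMatrix, underMat]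
    by_cases h : Γ'.G.Adj i j
    · rw [if_pos h, if_pos h]
      rcases Γ'.sign_pm i j h with hs | hs <;> rw [hs] <;> norm_num
    · rw [if_neg h, if_neg h, abs_zero]
  -- `lambda1 Γ' ≤ μ`
  have hlam : Γ'.lambda1 ≤ μ := by
    obtain ⟨v, hv0, hv⟩ := exists_maxEig_vec hpos hAH
    have hvnn : (0:ℝ) ≤ v ⬝ᵥ v := Finset.sum_nonneg fun i _ => mul_self_nonneg _
    have hvv : 0 < v ⬝ᵥ v :=
      hvnn.lt_of_ne (fun h => hv0 (dotProduct_self_eq_zero.mp h.symm))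
    have e1 : v ⬝ᵥ (A *ᵥ v) = Γ'.lambda1 * (v ⬝ᵥ v) := by
      show v ⬝ᵥ (A *ᵥ v) = maxEig A * (v ⬝ᵥ v)
      rw [hv, dotProduct_smul]; simp; exact Or.inl rfl
    have e2 : v ⬝ᵥ (A *ᵥ v) ≤ (fun i => |v i|) ⬝ᵥ (B *ᵥ (fun i => |v i|)) := by
      simp only [dotProduct, Matrix.mulVec]
      refine Finset.sum_le_sum fun i _ => ?_
      calc v i * ∑ j, A i j * v j ≤ |v i * ∑ j, A i j * v j| := le_abs_self _
        _ = |v i| * |∑ j, A i j * v j| := abs_mul _ _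
        _ ≤ |v i| * ∑ j, |A i j * v j| :=
            mul_le_mul_of_nonneg_left (Finset.abs_sum_le_sum_abs _ _) (abs_nonneg _)
        _ = |v i| * ∑ j, B i j * |v j| := by
            congr 1; refine Finset.sum_congr rfl fun j _ => ?_
            rw [abs_mul, hBabs]
    have e3 := rayleigh_le_maxEig hpos hBH (fun i => |v i|)
    have e4 : (fun i => |v i|) ⬝ᵥ (fun i => |v i|) = v ⬝ᵥ v := by
      refine Finset.sum_congr rfl fun i _ => abs_mul_abs_self _
    rw [e4] at e3
    have : Γ'.lambda1 * (v ⬝ᵥ v) ≤ μ * (v ⬝ᵥ v) := by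
      rw [← e1]; exact le_trans e2 e3
    exact le_of_mul_le_mul_right this hvv
  have hμlow : (n:ℝ) - 3 ≤ μ := le_trans hlow hlam
  -- nonnegative eigenvector of `B`
  obtain ⟨w, hw0, hw⟩ := exists_maxEig_vec hpos hBH
  set F : Fin n → ℝ := fun i => |w i| with hF
  have hFnn : ∀ i, 0 ≤ F i := fun i => abs_nonneg _
  have hFF : F ⬝ᵥ F = w ⬝ᵥ w := Finset.sum_congr rfl fun i _ => abs_mul_abs_self _
  have hray : F ⬝ᵥ (B *ᵥ F) = μ * (F ⬝ᵥ F) := by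
    refine le_antisymm (rayleigh_le_maxEig hpos hBH F) ?_
    have h1 : μ * (F ⬝ᵥ F) = w ⬝ᵥ (B *ᵥ w) := by
      rw [hFF, hw, dotProduct_smul]; simp; exact Or.inl rfl
    rw [h1]
    simp only [dotProduct, Matrix.mulVec]
    refine Finset.sum_le_sum fun i _ => ?_
    rw [Finset.mul_sum, Finset.mul_sum]
    refine Finset.sum_le_sum fun j _ => ?_
    calc w i * (B i j * w j) ≤ |w i * (B i j * w j)| := le_abs_self _
      _ = F i * (B i j * F j) := by
          rw [abs_mul, abs_mul, abs_of_nonneg (hBnn i j)]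
  have hBF : B *ᵥ F = μ • F := eigenvec_of_rayleigh_eq hpos hBH F hray
  have hF0 : F ≠ 0 := by
    intro h
    apply hw0
    funext i
    have := congrFun h i
    simpa [hF, abs_eq_zero] using this
  obtain ⟨u, -, hu⟩ := Finset.exists_max_image Finset.univ F ⟨⟨0, hpos⟩, Finset.mem_univ _⟩
  have hFu : 0 < F u := by
    obtain ⟨i, hi⟩ : ∃ i, F i ≠ 0 := by
      by_contra h; push_neg at h; exact hF0 (funext h)
    exact lt_of_lt_of_le ((hFnn i).lt_of_ne (Ne.symm hi)) (hu i (Finset.mem_univ _))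
  have hBdiag : B u u = 0 := by simp [hB, underMat]
  -- common neighbour bound from C4-freeness of the underlying graph
  have hcn : ∀ j, j ≠ u → (B * B) u j ≤ 1 := by
    intro j hj
    rw [Matrix.mul_apply]
    have hterm : ∀ w' : Fin n, B u w' * B w' j
        = if (Γ'.G.Adj u w' ∧ Γ'.G.Adj w' j) then (1:ℝ) else 0 := by
      intro w'
      by_cases h1 : Γ'.G.Adj u w' <;> by_cases h2 : Γ'.G.Adj w' j <;>
        simp [hB, underMat, h1, h2]
    rw [Finset.sum_congr rfl fun w' _ => hterm w', Finset.sum_boole]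
    set T := Finset.univ.filter (fun w' : Fin n => Γ'.G.Adj u w' ∧ Γ'.G.Adj w' j) with hT
    by_contra hTgt
    push_neg at hTgt
    have hT2 : 1 < T.card := by exact_mod_cast hTgt
    obtain ⟨x, hx, y, hy, hxy⟩ := Finset.one_lt_card.mp hT2
    rw [hT, Finset.mem_filter] at hx hy
    obtain ⟨c, hc1, hc2⟩ := cycle4_of_adj hx.2.1 hx.2.2 hy.2.2.symm hy.2.1.symm hxy hj.symm
    exact hC4 ⟨u, c, hc1, hc2⟩
  -- degree identity
  have hdeg : (B * B) u u = ∑ j, B u j := by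
    rw [Matrix.mul_apply]
    refine Finset.sum_congr rfl fun w' _ => ?_
    by_cases h : Γ'.G.Adj u w'
    · simp [hB, underMat, h, h.symm]
    · simp [hB, underMat, h]
  -- pointwise bound
  have hpoint : ∀ j, (B * B) u j * F j
      ≤ B u j * F j + (if j = u then (B * B) u u else 1 - B u j) * F u := by
    intro j
    by_cases hj : j = u
    · subst hj
      rw [if_pos rfl, hBdiag]
      simp
    · rw [if_neg hj]
      have h1 := hcn j hj
      have h2 : (B * B) u j * F j ≤ F j := by
        calc (B * B) u j * F j ≤ 1 * F j := mul_le_mul_of_nonneg_right h1 (hFnn j)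
          _ = F j := one_mul _
      by_cases hadj : Γ'.G.Adj u j
      · have hBij : B u j = 1 := by simp [hB, underMat, hadj]
        rw [hBij]
        simpa using h2
      · have hBij : B u j = 0 := by simp [hB, underMat, hadj]
        rw [hBij]
        have := hu j (Finset.mem_univ _)
        simpa using le_trans h2 this
  -- sum everything
  have hsum1 : ∑ j, B u j * F j = μ * F u := by
    have := congrFun hBF u
    simpa [Matrix.mulVec, dotProduct] using this
  have hsumD : ∑ j, (if j = u then (B * B) u u else 1 - B u j) = (n:ℝ) - 1 := by
    rw [← Finset.add_sum_erase _ _ (Finset.mem_univ u), if_pos rfl]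
    have hrest : ∑ j ∈ Finset.univ.erase u, (if j = u then (B * B) u u else 1 - B u j)
        = ∑ j ∈ Finset.univ.erase u, (1 - B u j) := by
      refine Finset.sum_congr rfl fun j hj => ?_
      rw [if_neg (Finset.mem_erase.mp hj).1]
    rw [hrest, Finset.sum_sub_distrib, Finset.sum_const, Finset.card_erase_of_mem
      (Finset.mem_univ u), Finset.card_univ, Fintype.card_fin]
    have hrest2 : ∑ j ∈ Finset.univ.erase u, B u j = ∑ j, B u j := by
      rw [← Finset.add_sum_erase _ _ (Finset.mem_univ u), hBdiag, zero_add]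
    rw [hrest2, hdeg]
    have hcast : ((n - 1 : ℕ) : ℝ) = (n:ℝ) - 1 := by
      rw [Nat.cast_sub (by omega)]; norm_num
    simp only [nsmul_eq_mul, hcast]
    ring
  have hlhs : μ * (μ * F u) = ∑ j, (B * B) u j * F j := by
    have h1 : (B * B) *ᵥ F = μ • (μ • F) := by
      rw [← Matrix.mulVec_mulVec, hBF, Matrix.mulVec_smul, hBF]
    have h2 := congrFun h1 u
    simp only [Matrix.mulVec, dotProduct, Pi.smul_apply, smul_eq_mul] at h2
    rw [← h2]
  have hkey : μ * (μ * F u) ≤ μ * F u + ((n:ℝ) - 1) * F u := by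
    rw [hlhs, ← hsum1, ← hsumD]
    calc ∑ j, (B * B) u j * F j
        ≤ ∑ j, (B u j * F j + (if j = u then (B * B) u u else 1 - B u j) * F u) :=
          Finset.sum_le_sum fun j _ => hpoint j
      _ = (∑ j, B u j * F j) + (∑ j, (if j = u then (B * B) u u else 1 - B u j)) * F u := by
          rw [Finset.sum_add_distrib, Finset.sum_mul]
  have hfin : μ * μ ≤ μ + ((n:ℝ) - 1) := by
    have h1 : (μ * μ) * F u ≤ (μ + ((n:ℝ) - 1)) * F u := by ring_nf; ring_nf at hkey; linarith
    exact le_of_mul_le_mul_right h1 hFu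
  have hn6 : (6:ℝ) ≤ (n:ℝ) := by exact_mod_cast hn
  have hμ3 : (3:ℝ) ≤ μ := by linarith
  have h1 : ((n:ℝ) - 3) * μ ≤ μ * μ := mul_le_mul_of_nonneg_right hμlow (by linarith)
  have h2 : ((n:ℝ) - 4) * μ ≤ (n:ℝ) - 1 := by nlinarith
  have h3 : ((n:ℝ) - 4) * ((n:ℝ) - 3) ≤ ((n:ℝ) - 4) * μ :=
    mul_le_mul_of_nonneg_left hμlow (by linarith)
  nlinarith [h2, h3, hn6]
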